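/- arXiv:1806.07515 — 3 statements merged into one kernel-verified Lean document; each statement's English description precedes it below -/
import Mathlib

section
/- Let F be a finite extension of ℚ_p with set of ℚ_p-embeddings Γ_F into an algebraic closure of ℚ_p, and let (n_σ)_{σ∈Γ_F} be a family of integers. If there exists an open subgroup U of the unit group of the ring of integers of F such that ∏_{σ∈Γ_F} σ(x)^{n_σ} = 1 for all x ∈ U, then n_σ = 0 for all σ ∈ Γ_F. -/
/-- A multivariate polynomial over a field vanishing on `s^m` for `s` infinite is zero. -/
theorem mv_eq_zero_of_eval_zero_on {L : Type*} [Field L] {s : Set L} (hs : s.Infinite) :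
    ∀ {m : ℕ} (P : MvPolynomial (Fin m) L),
      (∀ z : Fin m → L, (∀ i, z i ∈ s) → MvPolynomial.eval z P = 0) → P = 0 := by
  intro m
  induction m with
  | zero =>
    intro P hP
    apply (MvPolynomial.isEmptyRingEquiv L (Fin 0)).injective
    rw [map_zero]
    convert hP finZeroElim (fun i => i.elim0)
    obtain ⟨r, rfl⟩ := (MvPolynomial.isEmptyRingEquiv L (Fin 0)).symm.surjective P
    simp
    exact MvPolynomial.coeff_zero_C r
  | succ m ih =>
    intro P hP
    apply (MvPolynomial.finSuccEquiv L m).injective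
    rw [map_zero]
    apply Polynomial.ext
    intro i
    rw [Polynomial.coeff_zero]
    apply ih
    intro z hz
    have hq : Polynomial.map (MvPolynomial.eval z) ((MvPolynomial.finSuccEquiv L m) P) = 0 := by
      apply Polynomial.eq_zero_of_infinite_isRoot
      apply hs.mono
      intro y hy
      simp only [Set.mem_setOf_eq, Polynomial.IsRoot]
      rw [← MvPolynomial.eval_eq_eval_mv_eval']
      exact hP (Fin.cons y z) (fun j => Fin.cases (by simpa using hy) (by simpa using hz) j)
    have h2 := congrArg (fun q => Polynomial.coeff q i) hq
    simpa [Polynomial.coeff_map] using h2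

theorem embeddings_rows_linearIndependent (K F L : Type*) [Field K] [Field F] [Field L]
    [Algebra K F] [Algebra K L] {d : ℕ} (B : Module.Basis (Fin d) K F) :
    LinearIndependent L (fun σ : F →ₐ[K] L => (fun i => σ (B i) : Fin d → L)) := by
  have hbase : LinearIndependent L (fun σ : F →ₐ[K] L => (⇑σ : F → L)) := by
    have := (linearIndependent_monoidHom F L).comp
      (fun σ : F →ₐ[K] L => (σ : F →* L))
      (fun σ₁ σ₂ hσ => AlgHom.ext fun x =>
        congrFun (congrArg (fun (m : F →* L) => (m : F → L)) hσ) x)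
    exact this
  have := hbase.map (f := LinearMap.funLeft L L (fun i : Fin d => B i)) ?_
  · exact this
  · rw [Submodule.disjoint_def]
    intro f hfspan hfker
    have hlin : ∀ f ∈ Submodule.span L (Set.range (fun σ : F →ₐ[K] L => (⇑σ : F → L))),
        (∀ x y : F, f (x + y) = f x + f y) ∧ (∀ (c : K) (x : F), f (c • x) = c • f x) := by
      intro f hf
      induction hf using Submodule.span_induction with
      | mem g hg =>
        obtain ⟨σ, rfl⟩ := hg
        refine ⟨fun x y => map_add σ x y, fun c x => ?_⟩
        show σ (c • x) = c • σ x
        rw [map_smul]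
      | zero => exact ⟨by simp, by simp⟩
      | add g₁ g₂ _ _ ih₁ ih₂ =>
        refine ⟨fun x y => by simp [Pi.add_apply, ih₁.1, ih₂.1]; ring, fun c x => ?_⟩
        simp [Pi.add_apply, ih₁.2, ih₂.2]
      | smul c g _ ih =>
        refine ⟨fun x y => by simp [ih.1]; ring, fun k x => ?_⟩
        simp only [Pi.smul_apply, ih.2]
        rw [smul_comm]
    obtain ⟨hadd, hsmul⟩ := hlin f hfspan
    let g : F →ₗ[K] L := { toFun := f, map_add' := hadd, map_smul' := hsmul }
    have hg0 : g = 0 := by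
      apply B.ext
      intro i
      have := congrFun hfker i
      exact (by simpa [LinearMap.funLeft] using this : f (B i) = 0)
    funext x
    exact congrFun (congrArg (fun (h : F →ₗ[K] L) => (h : F → L)) hg0) x

set_option maxHeartbeats 1000000 in
/-- Let `F` be a finite extension of `ℚ_p` (with its canonical `p`-adic normed
field topology, expressed here by a normed field structure extending the one of `ℚ_p`),
`Γ_F` the set of `ℚ_p`-embeddings of `F` into an algebraic closure of `ℚ_p`, and
`(n_σ)` a family of integers.  If there is an open subgroup `U` of the unit group of the
ring of integers of `F` with `∏_σ σ(x)^{n_σ} = 1` for all `x ∈ U`, then all `n_σ = 0`. -/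
theorem stmt_0 (p : ℕ) [Fact p.Prime] (F : Type) [NormedField F] [Algebra ℚ_[p] F]
    [FiniteDimensional ℚ_[p] F]
    (hnorm : ∀ x : ℚ_[p], ‖algebraMap ℚ_[p] F x‖ = ‖x‖)
    [Algebra ℤ_[p] F] [IsScalarTower ℤ_[p] ℚ_[p] F]
    (n : (F →ₐ[ℚ_[p]] AlgebraicClosure ℚ_[p]) → ℤ)
    (U : Subgroup (integralClosure ℤ_[p] F)ˣ)
    (hUopen : IsOpen ((fun u : (integralClosure ℤ_[p] F)ˣ =>
      ((u : integralClosure ℤ_[p] F) : F)) '' (U : Set (integralClosure ℤ_[p] F)ˣ)))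
    (h : ∀ u ∈ U, ∏ σ : F →ₐ[ℚ_[p]] AlgebraicClosure ℚ_[p],
      σ (((u : (integralClosure ℤ_[p] F)ˣ) : integralClosure ℤ_[p] F) : F) ^ n σ = 1) :
    ∀ σ, n σ = 0 := by
  classical
  intro τ
  set L := AlgebraicClosure ℚ_[p] with hLdef
  set a : (F →ₐ[ℚ_[p]] L) → ℕ := fun σ => (n σ).toNat with hadef
  set b : (F →ₐ[ℚ_[p]] L) → ℕ := fun σ => (-n σ).toNat with hbdef
  -- Step 1: the image of U contains a ball around 1
  have h1img : (1 : F) ∈ ((fun u : (integralClosure ℤ_[p] F)ˣ =>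
      ((u : integralClosure ℤ_[p] F) : F)) '' (U : Set (integralClosure ℤ_[p] F)ˣ)) := by
    refine ⟨1, U.one_mem, ?_⟩
    show (((1 : (integralClosure ℤ_[p] F)ˣ) : integralClosure ℤ_[p] F) : F) = 1
    rw [Units.val_one]; norm_num
  obtain ⟨ε, hε, hball⟩ := Metric.isOpen_iff.mp hUopen 1 h1img
  -- Step 2: multiplicative identity with nonnegative exponents on the ball
  have key : ∀ y : F, ‖y‖ < ε →
      (∏ σ : F →ₐ[ℚ_[p]] L, σ (1 + y) ^ a σ) = ∏ σ : F →ₐ[ℚ_[p]] L, σ (1 + y) ^ b σ := by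
    intro y hy
    have hmem : (1 + y : F) ∈ _ := hball (show (1 + y : F) ∈ Metric.ball (1 : F) ε by
      simpa [Metric.mem_ball, dist_eq_norm] using hy)
    obtain ⟨u, hu, huy⟩ := hmem
    have hne0 : (1 + y : F) ≠ 0 := by
      rw [← huy]
      have hmul0 := congrArg (fun v : (integralClosure ℤ_[p] F)ˣ =>
        (((v : integralClosure ℤ_[p] F)) : F)) (mul_inv_cancel u)
      simp only [Units.val_mul, MulMemClass.coe_mul, Units.val_one,
        OneMemClass.coe_one] at hmul0
      exact left_ne_zero_of_mul_eq_one hmul0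
    have hne : ∀ σ : F →ₐ[ℚ_[p]] L, σ (1 + y) ≠ 0 := by
      intro σ hσ
      exact hne0 ((σ : F →+* L).injective (by simpa using hσ))
    have hmain : ∏ σ : F →ₐ[ℚ_[p]] L, σ (1 + y) ^ n σ = 1 := by
      have huy' : (((u : (integralClosure ℤ_[p] F)ˣ) : integralClosure ℤ_[p] F) : F)
          = 1 + y := huy
      have := h u hu
      rw [huy'] at this
      exact this
    have hsplit : ∀ σ : F →ₐ[ℚ_[p]] L,
        σ (1 + y) ^ (a σ) = σ (1 + y) ^ n σ * σ (1 + y) ^ (b σ) := by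
      intro σ
      rw [← zpow_natCast (σ (1 + y)) (a σ), ← zpow_natCast (σ (1 + y)) (b σ),
        ← zpow_add₀ (hne σ)]
      congr 1
      simp only [hadef, hbdef]
      omega
    calc ∏ σ : F →ₐ[ℚ_[p]] L, σ (1 + y) ^ a σ
        = ∏ σ : F →ₐ[ℚ_[p]] L, (σ (1 + y) ^ n σ * σ (1 + y) ^ b σ) :=
          Finset.prod_congr rfl (fun σ _ => hsplit σ)
      _ = (∏ σ : F →ₐ[ℚ_[p]] L, σ (1 + y) ^ n σ) *
            ∏ σ : F →ₐ[ℚ_[p]] L, σ (1 + y) ^ b σ := Finset.prod_mul_distrib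
      _ = ∏ σ : F →ₐ[ℚ_[p]] L, σ (1 + y) ^ b σ := by rw [hmain, one_mul]
  -- Step 3: basis and polynomial
  set d := Module.finrank ℚ_[p] F with hddef
  set B : Module.Basis (Fin d) ℚ_[p] F := Module.finBasis ℚ_[p] F with hBdef
  set Q : MvPolynomial (Fin d) L :=
    (∏ σ : F →ₐ[ℚ_[p]] L,
        (1 + ∑ i, MvPolynomial.C (σ (B i)) * MvPolynomial.X i) ^ a σ)
      - ∏ σ : F →ₐ[ℚ_[p]] L,
        (1 + ∑ i, MvPolynomial.C (σ (B i)) * MvPolynomial.X i) ^ b σ with hQdef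
  -- the small set
  set Mb : ℝ := ∑ i, ‖B i‖ with hMdef
  have hMb : 0 ≤ Mb := Finset.sum_nonneg (fun i _ => norm_nonneg _)
  set δ : ℝ := ε / (Mb + 1) with hδdef
  have hδ : 0 < δ := div_pos hε (by linarith)
  set s : Set L := (algebraMap ℚ_[p] L) '' {c : ℚ_[p] | ‖c‖ ≤ δ} with hsdef
  have hsinf : s.Infinite := by
    obtain ⟨c₀, hc₀pos, hc₀lt⟩ := NormedField.exists_norm_lt ℚ_[p] hδ
    have hc₀ : c₀ ≠ 0 := by simpa [norm_pos_iff] using hc₀pos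
    refine Set.infinite_of_injective_forall_mem
      (f := fun k : ℕ => algebraMap ℚ_[p] L (c₀ * k)) ?_ ?_
    · intro k₁ k₂ hk
      have := (algebraMap ℚ_[p] L).injective hk
      have := mul_left_cancel₀ hc₀ this
      exact_mod_cast this
    · intro k
      refine ⟨c₀ * k, ?_, rfl⟩
      simp only [Set.mem_setOf_eq, norm_mul]
      calc ‖c₀‖ * ‖(k : ℚ_[p])‖ ≤ ‖c₀‖ * 1 := by
            apply mul_le_mul_of_nonneg_left _ (norm_nonneg _)
            exact_mod_cast Padic.norm_int_le_one (k : ℤ)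
        _ ≤ δ := by rw [mul_one]; exact le_of_lt hc₀lt
  -- Step 4 : Q vanishes on s^d
  have hQ0 : Q = 0 := by
    apply mv_eq_zero_of_eval_zero_on hsinf
    intro z hz
    choose c hc1 hc2 using hz
    set y : F := ∑ i, c i • B i with hydef
    have hylt : ‖y‖ < ε := by
      have h1 : ‖y‖ ≤ δ * Mb := by
        rw [hydef]
        refine le_trans (norm_sum_le _ _) ?_
        rw [Finset.mul_sum]
        apply Finset.sum_le_sum
        intro i _
        rw [Algebra.smul_def, norm_mul, hnorm]
        exact mul_le_mul_of_nonneg_right (hc1 i) (norm_nonneg _)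
      have h2 : δ * Mb < ε := by
        have : δ * (Mb + 1) = ε := by
          rw [hδdef]; field_simp
        nlinarith
      linarith
    have heval : ∀ σ : F →ₐ[ℚ_[p]] L,
        MvPolynomial.eval z (1 + ∑ i, MvPolynomial.C (σ (B i)) * MvPolynomial.X i)
          = σ (1 + y) := by
      intro σ
      rw [map_add, map_one, map_sum, map_add, map_one, map_sum]
      congr 1
      apply Finset.sum_congr rfl
      intro i _
      rw [map_mul, MvPolynomial.eval_C, MvPolynomial.eval_X, map_smul,
        Algebra.smul_def, ← hc2 i, mul_comm]
    rw [hQdef, map_sub, map_prod, map_prod]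
    simp only [map_pow, heval]
    rw [key y hylt, sub_self]
  -- Step 5: surjectivity of the embedding matrix
  have hcard : Fintype.card (F →ₐ[ℚ_[p]] L) = d := AlgHom.card ℚ_[p] F L
  set e : (F →ₐ[ℚ_[p]] L) ≃ Fin d := Fintype.equivFinOfCardEq hcard with hedef
  set M : Matrix (Fin d) (Fin d) L :=
    Matrix.of (fun j i => (e.symm j) (B i)) with hMdef'
  have hrows : LinearIndependent L (fun j => M j) :=
    (embeddings_rows_linearIndependent ℚ_[p] F L B).comp e.symm e.symm.injective
  have hsurj : Function.Surjective M.mulVec :=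
    Matrix.mulVec_surjective_iff_isUnit.mpr
      (Matrix.linearIndependent_rows_iff_isUnit.mp hrows)
  -- Step 6: specialize
  have hfinal : ∀ t : L, t ^ a τ = t ^ b τ := by
    intro t
    obtain ⟨z, hzw⟩ := hsurj (fun j => (if e.symm j = τ then t else 1) - 1)
    have hzσ : ∀ σ : F →ₐ[ℚ_[p]] L,
        (1 : L) + ∑ i, σ (B i) * z i = if σ = τ then t else 1 := by
      intro σ
      have := congrFun hzw (e σ)
      simp only [Matrix.mulVec, dotProduct, hMdef', Matrix.of_apply,
        Equiv.symm_apply_apply] at this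
      rw [this]
      ring
    have hzero := congrArg (MvPolynomial.eval z) hQ0
    rw [hQdef, map_sub, map_prod, map_prod, map_zero, sub_eq_zero] at hzero
    have hev : ∀ σ : F →ₐ[ℚ_[p]] L,
        MvPolynomial.eval z (1 + ∑ i, MvPolynomial.C (σ (B i)) * MvPolynomial.X i)
          = if σ = τ then t else 1 := by
      intro σ
      rw [map_add, map_one, map_sum]
      simp only [map_mul, MvPolynomial.eval_C, MvPolynomial.eval_X]
      exact hzσ σ
    simp only [map_pow, hev] at hzero
    have hl : ∀ (m : (F →ₐ[ℚ_[p]] L) → ℕ),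
        (∏ σ : F →ₐ[ℚ_[p]] L, (if σ = τ then t else 1) ^ m σ) = t ^ m τ := by
      intro m
      rw [Finset.prod_eq_single τ]
      · simp
      · intro σ _ hστ
        simp [hστ]
      · intro hτ
        exact absurd (Finset.mem_univ τ) hτ
    rw [hl a, hl b] at hzero
    exact hzero
  -- Step 7: conclude
  have hchar : CharZero L := charZero_of_injective_algebraMap
    (algebraMap ℚ_[p] L).injective
  have hp2 : 2 ≤ p := (Fact.out : p.Prime).two_le
  have := hfinal ((p : ℕ) : L)
  rw [← Nat.cast_pow, ← Nat.cast_pow] at this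
  have hab : a τ = b τ := Nat.pow_right_injective hp2 (Nat.cast_injective this)
  simp only [hadef, hbdef] at hab
  omega
end

section
/- Every continuous group homomorphism from p^m ℤ_p (for m > 0) to the multiplicative group of an algebraically closed field complete with respect to a p-adic absolute value (e.g. \bar{ℚ}_p^×) extends to a continuous homomorphism ℤ_p → \bar{ℚ}_p^×. -/
open Filter Topology Finset

section aux
variable {p : ℕ} [Fact p.Prime] {L : Type} [NormedField L] [IsUltrametricDist L]

lemma aux_nonarch {S : Type*} [SeminormedAddCommGroup S] [IsUltrametricDist S] (x y : S) :
    ‖x - y‖ ≤ max ‖x‖ ‖y‖ := by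
  rw [sub_eq_add_neg]
  simpa using IsUltrametricDist.norm_add_le_max x (-y)

-- Lemma A: geometric bound
lemma aux_norm_eq_one {w : L} (ht : ‖w - 1‖ < 1) : ‖w‖ = 1 := by
  have h : w = 1 + (w - 1) := by ring
  rw [h, IsUltrametricDist.norm_add_eq_max_of_norm_ne_norm (by rw [norm_one]; exact ht.ne')]
  rw [norm_one]
  exact max_eq_left ht.le

lemma aux_norm_pow_sub_one_le {w : L} (hw : ‖w‖ ≤ 1) (n : ℕ) : ‖w ^ n - 1‖ ≤ ‖w - 1‖ := by
  rw [← geom_sum_mul, norm_mul]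
  calc ‖∑ i ∈ range n, w ^ i‖ * ‖w - 1‖ ≤ 1 * ‖w - 1‖ := by
        gcongr
        exact IsUltrametricDist.norm_sum_le_of_forall_le_of_nonneg zero_le_one
          (fun i _ => by simpa using pow_le_one₀ (norm_nonneg w) hw)
  _ = ‖w - 1‖ := one_mul _

omit [IsUltrametricDist L] in
lemma aux_expand (w : L) {N : ℕ} (hN : 0 < N) :
    w ^ N - 1 - (w - 1) ^ N = ∑ k ∈ Ico 1 N, (w - 1) ^ k * (N.choose k : L) := by
  have h := add_pow (w - 1) (1 : L) N
  simp only [sub_add_cancel, one_pow, mul_one] at h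
  rw [Finset.sum_range_succ, Finset.range_eq_Ico, Finset.sum_eq_sum_Ico_succ_bot hN] at h
  simp only [Nat.choose_zero_right, Nat.choose_self, pow_zero, Nat.cast_one, mul_one, one_mul] at h
  linear_combination h

lemma aux_middle (hL : ‖(p : L)‖ ≤ (p:ℝ)⁻¹) {w : L} (ht : ‖w - 1‖ ≤ 1) {N : ℕ} (hN : 0 < N)
    (hdvd : ∀ k ∈ Ico 1 N, p ∣ N.choose k) :
    ‖w ^ N - 1 - (w - 1) ^ N‖ ≤ (p:ℝ)⁻¹ * ‖w - 1‖ := by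
  rw [aux_expand w hN]
  refine IsUltrametricDist.norm_sum_le_of_forall_le_of_nonneg
    (by positivity) (fun k hk => ?_)
  obtain ⟨c, hc⟩ := hdvd k hk
  rw [norm_mul, hc]
  push_cast
  rw [norm_mul, norm_pow]
  have h1 : ‖w - 1‖ ^ k ≤ ‖w - 1‖ := by
    apply pow_le_of_le_one (norm_nonneg _) ht
    exact Nat.one_le_iff_ne_zero.mp (Finset.mem_Ico.mp hk).1
  have h2 : ‖(p : L)‖ * ‖(c : L)‖ ≤ (p:ℝ)⁻¹ := by
    calc ‖(p : L)‖ * ‖(c : L)‖ ≤ (p:ℝ)⁻¹ * 1 :=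
      mul_le_mul hL (IsUltrametricDist.norm_natCast_le_one L c) (norm_nonneg _) (by positivity)
    _ = (p:ℝ)⁻¹ := mul_one _
  calc ‖w - 1‖ ^ k * (‖(p:L)‖ * ‖(c:L)‖) ≤ ‖w - 1‖ * (p:ℝ)⁻¹ :=
        mul_le_mul h1 h2 (by positivity) (norm_nonneg _)
  _ = (p:ℝ)⁻¹ * ‖w - 1‖ := mul_comm _ _

lemma aux_dvd_choose (n : ℕ) : ∀ k ∈ Ico 1 (p ^ n), p ∣ (p ^ n).choose k := fun k hk => by
  rw [Finset.mem_Ico] at hk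
  exact Nat.Prime.dvd_choose_pow (Fact.out : p.Prime) (by omega) (by omega)

-- backward: if ‖w‖ ≤ 1 and ‖w^{p^n} - 1‖ < 1 then ‖w - 1‖ < 1
lemma aux_backward (hL : ‖(p : L)‖ ≤ (p:ℝ)⁻¹) {w : L} (hw : ‖w‖ ≤ 1) {n : ℕ}
    (h : ‖w ^ p ^ n - 1‖ < 1) : ‖w - 1‖ < 1 := by
  have hp1 : 1 < p := (Fact.out : p.Prime).one_lt
  have hpinv : (p:ℝ)⁻¹ < 1 := by
    rw [inv_lt_one_iff₀]; right; exact_mod_cast hp1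
  have ht : ‖w - 1‖ ≤ 1 := by
    refine (aux_nonarch w 1).trans ?_
    simp [hw]
  rcases eq_or_lt_of_le ht with heq | hlt
  · exfalso
    have hmid := aux_middle hL ht (pow_pos (Fact.out : p.Prime).pos n) (aux_dvd_choose n)
    have hkey : ‖(w - 1) ^ p ^ n‖ ≤ max ‖w ^ p ^ n - 1‖ ((p:ℝ)⁻¹ * ‖w - 1‖) := by
      have he : (w - 1) ^ p ^ n = (w ^ p ^ n - 1) - (w ^ p ^ n - 1 - (w - 1) ^ p ^ n) := by ring
      rw [he]
      exact (aux_nonarch _ _).trans (max_le_max le_rfl hmid)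
    rw [norm_pow, heq, one_pow, mul_one] at hkey
    exact absurd (hkey.trans_lt (max_lt h hpinv)) (lt_irrefl 1)
  · exact hlt
end aux

section aux2
variable {p : ℕ} [Fact p.Prime] {L : Type} [NormedField L] [IsUltrametricDist L]

/-- `r w = max (‖w-1‖^(p-1)) p⁻¹`. -/
noncomputable def auxR (p : ℕ) (w : L) : ℝ := max (‖w - 1‖ ^ (p - 1)) ((p:ℝ)⁻¹)

lemma auxR_nonneg (w : L) : 0 ≤ auxR p w := le_max_of_le_right (by positivity)

lemma auxR_lt_one {w : L} (ht : ‖w - 1‖ < 1) : auxR p w < 1 := by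
  have hp1 : 1 < p := (Fact.out : p.Prime).one_lt
  apply max_lt
  · exact pow_lt_one₀ (norm_nonneg _) ht (by omega)
  · rw [inv_lt_one_iff₀]; right; exact_mod_cast hp1

lemma auxR_le_one {w : L} (ht : ‖w - 1‖ ≤ 1) : auxR p w ≤ 1 := by
  have hp1 : 1 < p := (Fact.out : p.Prime).one_lt
  apply max_le
  · exact pow_le_one₀ (norm_nonneg _) ht
  · rw [inv_le_one_iff₀]; right; exact_mod_cast hp1.le

lemma aux_forward (hL : ‖(p : L)‖ ≤ (p:ℝ)⁻¹) {w : L} (ht : ‖w - 1‖ ≤ 1) :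
    ‖w ^ p - 1‖ ≤ ‖w - 1‖ * auxR p w := by
  have hp1 : 1 < p := (Fact.out : p.Prime).one_lt
  have hdvd : ∀ k ∈ Ico 1 p, p ∣ p.choose k := fun k hk => by
    rw [Finset.mem_Ico] at hk
    exact (Fact.out : p.Prime).dvd_choose_self (by omega) (by omega)
  have hmid := aux_middle hL ht (by omega : 0 < p) hdvd
  have he : w ^ p - 1 = (w ^ p - 1 - (w - 1) ^ p) + (w - 1) ^ p := by ring
  rw [he]
  refine (IsUltrametricDist.norm_add_le_max _ _).trans (max_le ?_ ?_)
  · exact hmid.trans (by rw [mul_comm]; gcongr; exact le_max_right _ _)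
  · rw [norm_pow]
    calc ‖w - 1‖ ^ p = ‖w - 1‖ * ‖w - 1‖ ^ (p - 1) := by
          rw [← pow_succ']; congr 1; omega
    _ ≤ ‖w - 1‖ * auxR p w := by gcongr; exact le_max_left _ _

lemma aux_iter (hL : ‖(p : L)‖ ≤ (p:ℝ)⁻¹) {w : L} (ht : ‖w - 1‖ < 1) (n : ℕ) :
    ‖w ^ p ^ n - 1‖ ≤ ‖w - 1‖ * auxR p w ^ n := by
  induction n with
  | zero => simp
  | succ n ih =>
    have hwn : ‖w‖ = 1 := aux_norm_eq_one ht
    have hsub : ‖w ^ p ^ n - 1‖ ≤ ‖w - 1‖ := aux_norm_pow_sub_one_le (le_of_eq hwn) (p ^ n)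
    have htn : ‖w ^ p ^ n - 1‖ ≤ 1 := hsub.trans ht.le
    have hfwd := aux_forward hL (w := w ^ p ^ n) htn
    rw [← pow_mul, ← pow_succ] at hfwd
    refine hfwd.trans ?_
    have hrle : auxR p (w ^ p ^ n) ≤ auxR p w :=
      max_le_max (pow_le_pow_left₀ (norm_nonneg _) hsub _) le_rfl
    calc ‖w ^ p ^ n - 1‖ * auxR p (w ^ p ^ n)
        ≤ (‖w - 1‖ * auxR p w ^ n) * auxR p w :=
          mul_le_mul ih hrle (auxR_nonneg _) (mul_nonneg (norm_nonneg _) (pow_nonneg (auxR_nonneg _) n))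
    _ = ‖w - 1‖ * auxR p w ^ (n + 1) := by ring

-- master two-power estimate
lemma aux_pow_close (hL : ‖(p : L)‖ ≤ (p:ℝ)⁻¹) {w : L} (ht : ‖w - 1‖ < 1)
    {a b : ℕ} {n : ℕ} (hd : ((p : ℤ)) ^ n ∣ (a : ℤ) - (b : ℤ)) :
    ‖w ^ a - w ^ b‖ ≤ ‖w - 1‖ * auxR p w ^ n := by
  have hwn : ‖w‖ = 1 := aux_norm_eq_one ht
  have key : ∀ a b : ℕ, b ≤ a → ((p : ℤ)) ^ n ∣ (a : ℤ) - (b : ℤ) →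
      ‖w ^ a - w ^ b‖ ≤ ‖w - 1‖ * auxR p w ^ n := by
    intro a b hba hd
    obtain ⟨q, hq⟩ : p ^ n ∣ a - b := by
      have h2 : ((a - b : ℕ) : ℤ) = (a : ℤ) - b := by omega
      have h3 : ((p : ℤ)) ^ n ∣ ((a - b : ℕ) : ℤ) := h2 ▸ hd
      exact_mod_cast h3
    have ha : a = b + p ^ n * q := by omega
    have he : w ^ a - w ^ b = w ^ b * ((w ^ p ^ n) ^ q - 1) := by
      rw [ha, pow_add, pow_mul]; ring
    rw [he, norm_mul, norm_pow, hwn, one_pow, one_mul]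
    calc ‖(w ^ p ^ n) ^ q - 1‖ ≤ ‖w ^ p ^ n - 1‖ := by
          apply aux_norm_pow_sub_one_le
          rw [norm_pow, hwn, one_pow]
    _ ≤ ‖w - 1‖ * auxR p w ^ n := aux_iter hL ht n
  rcases le_total b a with hba | hab
  · exact key a b hba hd
  · rw [norm_sub_rev]
    exact key b a hab (dvd_sub_comm.mp hd)

end aux2
section aux3
variable {p : ℕ} [Fact p.Prime] {L : Type} [NormedField L] [IsUltrametricDist L]
  [CompleteSpace L]

noncomputable def padPow (w : L) (x : ℤ_[p]) : L :=
  limUnder atTop (fun n => w ^ (x.appr n))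

lemma aux_appr_norm (x : ℤ_[p]) (n : ℕ) :
    ‖x - ((x.appr n : ℕ) : ℤ_[p])‖ ≤ (p : ℝ) ^ (-(n : ℤ)) := by
  rw [PadicInt.norm_le_pow_iff_mem_span_pow]
  exact PadicInt.appr_spec n x

lemma aux_int_close {a b : ℕ} {n : ℕ} {x : ℤ_[p]}
    (h1 : ‖x - (a : ℤ_[p])‖ ≤ (p : ℝ) ^ (-(n : ℤ)))
    (h2 : ‖x - (b : ℤ_[p])‖ ≤ (p : ℝ) ^ (-(n : ℤ))) :
    ((p : ℤ)) ^ n ∣ (a : ℤ) - (b : ℤ) := by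
  have key : ‖(((a : ℤ) - (b : ℤ) : ℤ) : ℤ_[p])‖ ≤ (p : ℝ) ^ (-(n : ℤ)) := by
    have he : (((a : ℤ) - (b : ℤ) : ℤ) : ℤ_[p]) = (x - (b : ℤ_[p])) - (x - (a : ℤ_[p])) := by
      push_cast; ring
    rw [he]
    exact (aux_nonarch _ _).trans (max_le h2 h1)
  rw [PadicInt.norm_int_le_pow_iff_dvd] at key
  exact_mod_cast key

lemma aux_pow_zpow (n : ℕ) {N : ℕ} (hN : N ≤ n) :
    (p : ℝ) ^ (-(n : ℤ)) ≤ (p : ℝ) ^ (-(N : ℤ)) := by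
  have hp1 : (1 : ℝ) < p := by exact_mod_cast (Fact.out : p.Prime).one_lt
  apply zpow_le_zpow_right₀ hp1.le
  omega

lemma aux_cauchy (hL : ‖(p : L)‖ ≤ (p:ℝ)⁻¹) {w : L} (ht : ‖w - 1‖ < 1) (x : ℤ_[p]) :
    CauchySeq (fun n => w ^ (x.appr n)) := by
  apply cauchySeq_of_le_tendsto_0 (fun n => ‖w - 1‖ * auxR p w ^ n)
  · intro n m N hn hm
    rw [dist_eq_norm]
    refine aux_pow_close hL ht (aux_int_close (x := x) ?_ ?_)
    · exact (aux_appr_norm x n).trans (aux_pow_zpow n hn)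
    · exact (aux_appr_norm x m).trans (aux_pow_zpow m hm)
  · simpa using (tendsto_pow_atTop_nhds_zero_of_lt_one (auxR_nonneg (p := p) w)
      (auxR_lt_one (p := p) ht)).const_mul ‖w - 1‖

lemma padPow_tendsto (hL : ‖(p : L)‖ ≤ (p:ℝ)⁻¹) {w : L} (ht : ‖w - 1‖ < 1) (x : ℤ_[p])
    {a : ℕ → ℕ} (ha : ∀ n, ‖x - ((a n : ℕ) : ℤ_[p])‖ ≤ (p : ℝ) ^ (-(n : ℤ))) :
    Tendsto (fun n => w ^ (a n)) atTop (𝓝 (padPow w x)) := by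
  have h1 : Tendsto (fun n => w ^ (x.appr n)) atTop (𝓝 (padPow w x)) :=
    (aux_cauchy hL ht x).tendsto_limUnder
  refine h1.congr_dist (squeeze_zero (fun n => dist_nonneg)
    (g := fun n => ‖w - 1‖ * auxR p w ^ n) (fun n => ?_) ?_)
  · rw [dist_eq_norm]
    exact aux_pow_close hL ht (aux_int_close (x := x) (aux_appr_norm x n) (ha n))
  · simpa using (tendsto_pow_atTop_nhds_zero_of_lt_one (auxR_nonneg (p := p) w)
      (auxR_lt_one (p := p) ht)).const_mul ‖w - 1‖

end aux3
section aux4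
variable {p : ℕ} [Fact p.Prime] {L : Type} [NormedField L] [IsUltrametricDist L]
  [CompleteSpace L]

lemma padPow_natCast (hL : ‖(p : L)‖ ≤ (p:ℝ)⁻¹) {w : L} (ht : ‖w - 1‖ < 1) (c : ℕ) :
    padPow w ((c : ℕ) : ℤ_[p]) = w ^ c := by
  refine tendsto_nhds_unique (padPow_tendsto hL ht _ (a := fun _ => c) (fun n => by
    simp [zpow_nonneg (by positivity : (0:ℝ) ≤ (p:ℝ))])) tendsto_const_nhds

lemma padPow_add (hL : ‖(p : L)‖ ≤ (p:ℝ)⁻¹) {w : L} (ht : ‖w - 1‖ < 1) (x y : ℤ_[p]) :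
    padPow w (x + y) = padPow w x * padPow w y := by
  have hxy : ∀ n, ‖(x + y) - ((x.appr n + y.appr n : ℕ) : ℤ_[p])‖ ≤ (p : ℝ) ^ (-(n : ℤ)) := by
    intro n
    have he : (x + y) - ((x.appr n + y.appr n : ℕ) : ℤ_[p])
        = (x - (x.appr n : ℤ_[p])) + (y - (y.appr n : ℤ_[p])) := by push_cast; ring
    rw [he]
    exact (IsUltrametricDist.norm_add_le_max _ _).trans
      (max_le (aux_appr_norm x n) (aux_appr_norm y n))
  have t1 : Tendsto (fun n => w ^ (x.appr n + y.appr n)) atTop (𝓝 (padPow w (x + y))) :=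
    padPow_tendsto hL ht _ hxy
  have t2 : Tendsto (fun n => w ^ (x.appr n) * w ^ (y.appr n)) atTop
      (𝓝 (padPow w x * padPow w y)) :=
    ((padPow_tendsto hL ht x (fun n => aux_appr_norm x n)).mul
      (padPow_tendsto hL ht y (fun n => aux_appr_norm y n)))
  have t1' : Tendsto (fun n => w ^ (x.appr n) * w ^ (y.appr n)) atTop
      (𝓝 (padPow w (x + y))) := t1.congr (fun n => pow_add w _ _)
  exact tendsto_nhds_unique t1' t2

lemma padPow_norm (hL : ‖(p : L)‖ ≤ (p:ℝ)⁻¹) {w : L} (ht : ‖w - 1‖ < 1) (x : ℤ_[p]) :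
    ‖padPow w x‖ = 1 := by
  have hwn : ‖w‖ = 1 := aux_norm_eq_one ht
  have t1 := (padPow_tendsto hL ht x (fun n => aux_appr_norm x n)).norm
  have : (fun n => ‖w ^ (x.appr n)‖) = fun _ => (1:ℝ) := by
    funext n; rw [norm_pow, hwn, one_pow]
  rw [this] at t1
  exact tendsto_nhds_unique t1 tendsto_const_nhds

lemma padPow_dist (hL : ‖(p : L)‖ ≤ (p:ℝ)⁻¹) {w : L} (ht : ‖w - 1‖ < 1) {x y : ℤ_[p]} {n : ℕ}
    (h : ‖x - y‖ ≤ (p : ℝ) ^ (-(n : ℤ))) :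
    ‖padPow w x - padPow w y‖ ≤ ‖w - 1‖ * auxR p w ^ n := by
  have t1 := (padPow_tendsto hL ht x (fun k => aux_appr_norm x k)).sub
    (padPow_tendsto hL ht y (fun k => aux_appr_norm y k))
  refine le_of_tendsto t1.norm (eventually_atTop.mpr ⟨n, fun k hk => ?_⟩)
  refine aux_pow_close hL ht (aux_int_close (x := x) ((aux_appr_norm x k).trans
    (aux_pow_zpow k hk)) ?_)
  have he : x - ((y.appr k : ℕ) : ℤ_[p]) = (x - y) + (y - (y.appr k : ℤ_[p])) := by ring
  rw [he]
  exact (IsUltrametricDist.norm_add_le_max _ _).trans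
    (max_le h ((aux_appr_norm y k).trans (aux_pow_zpow k hk)))

lemma padPow_continuous (hL : ‖(p : L)‖ ≤ (p:ℝ)⁻¹) {w : L} (ht : ‖w - 1‖ < 1) :
    Continuous (padPow (p := p) w) := by
  rw [Metric.continuous_iff]
  intro x ε hε
  obtain ⟨n, hn⟩ : ∃ n : ℕ, ‖w - 1‖ * auxR p w ^ n < ε := by
    have := (tendsto_pow_atTop_nhds_zero_of_lt_one (auxR_nonneg (p := p) w)
      (auxR_lt_one (p := p) ht)).const_mul ‖w - 1‖
    rw [mul_zero] at this
    exact ((this.eventually (eventually_lt_nhds hε)).exists)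
  refine ⟨(p : ℝ) ^ (-(n : ℤ)), zpow_pos (by exact_mod_cast (Fact.out : p.Prime).pos) _, fun y hy => ?_⟩
  rw [dist_eq_norm] at hy ⊢
  exact (padPow_dist hL ht (x := y) (y := x) hy.le).trans_lt hn

end aux4
section final

lemma aux_real_not_lt {p : ℕ} [Fact p.Prime] {s : ℝ} (hs : 0 < s)
    (h : Filter.Tendsto (fun k => s ^ p ^ k) atTop (𝓝 1)) : ¬ s < 1 := by
  intro hlt
  have hp1 : 1 < p := (Fact.out : p.Prime).one_lt
  have h0 : Filter.Tendsto (fun k : ℕ => s ^ p ^ k) atTop (𝓝 0) := by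
    apply squeeze_zero (fun k => by positivity) (g := fun k => s ^ k)
    · intro k
      exact pow_le_pow_of_le_one hs.le hlt.le (Nat.lt_pow_self hp1 : k < p ^ k).le
    · exact tendsto_pow_atTop_nhds_zero_of_lt_one hs.le hlt
  exact one_ne_zero (tendsto_nhds_unique h h0)

lemma aux_real_eq_one {p : ℕ} [Fact p.Prime] {s : ℝ} (hs : 0 < s)
    (h : Filter.Tendsto (fun k => s ^ p ^ k) atTop (𝓝 1)) : s = 1 := by
  have h1 := aux_real_not_lt hs h
  have h2 : ¬ s⁻¹ < 1 := by
    apply aux_real_not_lt (p := p) (by positivity)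
    have := h.inv₀ one_ne_zero
    simpa [inv_pow] using this
  have : s ≤ 1 := by
    by_contra hgt
    push_neg at hgt
    exact h2 (by rw [inv_lt_one_iff₀]; right; exact hgt)
  rcases this.lt_or_eq with hlt | heq
  · exact absurd hlt h1
  · exact heq

/-- every continuous homomorphism from the (additive, hence written
multiplicatively via `Multiplicative`) group `p^m ℤ_p` (`m > 0`) to the multiplicative
group of an algebraically closed field `L`, complete with respect to a `p`-adic absolute
value (a nonarchimedean norm with `‖p‖ = p⁻¹`), extends to a continuous homomorphism
`ℤ_p → Lˣ`. -/
theorem stmt_3 (p : ℕ) [Fact p.Prime] (m : ℕ) (hm : 0 < m)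
    (L : Type) [NormedField L] [IsAlgClosed L] [CompleteSpace L] [IsUltrametricDist L]
    (hL : ‖(p : L)‖ = (p : ℝ)⁻¹)
    (φ : Multiplicative ((AddMonoidHom.mulLeft ((p : ℤ_[p]) ^ m)).range) →* Lˣ)
    (hφ : Continuous φ) :
    ∃ ψ : Multiplicative ℤ_[p] →* Lˣ, Continuous ψ ∧
      ∀ x : (AddMonoidHom.mulLeft ((p : ℤ_[p]) ^ m)).range,
        ψ (Multiplicative.ofAdd (x : ℤ_[p])) = φ (Multiplicative.ofAdd x) := by
  have hL' : ‖(p : L)‖ ≤ (p : ℝ)⁻¹ := le_of_eq hL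
  have hppos : 0 < p := (Fact.out : p.Prime).pos
  have hbase_mem : ((p : ℤ_[p]) ^ m) ∈ (AddMonoidHom.mulLeft ((p : ℤ_[p]) ^ m)).range :=
    ⟨1, by simp⟩
  let base : (AddMonoidHom.mulLeft ((p : ℤ_[p]) ^ m)).range := ⟨(p : ℤ_[p]) ^ m, hbase_mem⟩
  let u : Lˣ := φ (Multiplicative.ofAdd base)
  -- step 1 : u ^ p ^ k → 1
  have hgk : Filter.Tendsto (fun k : ℕ => ((p ^ k • base :
      (AddMonoidHom.mulLeft ((p : ℤ_[p]) ^ m)).range) : ℤ_[p])) atTop (𝓝 0) := by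
    have hco : ∀ k : ℕ, ((p ^ k • base :
        (AddMonoidHom.mulLeft ((p : ℤ_[p]) ^ m)).range) : ℤ_[p])
        = (p : ℤ_[p]) ^ k * (p : ℤ_[p]) ^ m := by
      intro k
      push_cast [base]
      rw [nsmul_eq_mul]
      push_cast
      ring
    simp only [hco]
    have hnorm : ‖(p : ℤ_[p])‖ < 1 := by
      rw [PadicInt.norm_p]
      rw [inv_lt_one_iff₀]; right; exact_mod_cast (Fact.out : p.Prime).one_lt
    simpa using (tendsto_pow_atTop_nhds_zero_of_norm_lt_one hnorm).mul_const ((p : ℤ_[p]) ^ m)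
  have hgk' : Filter.Tendsto (fun k : ℕ => (p ^ k • base :
      (AddMonoidHom.mulLeft ((p : ℤ_[p]) ^ m)).range)) atTop (𝓝 0) := by
    rw [Topology.IsEmbedding.subtypeVal.tendsto_nhds_iff]
    exact hgk
  have huk : Filter.Tendsto (fun k : ℕ => u ^ p ^ k) atTop (𝓝 1) := by
    have h1 := (hφ.tendsto (Multiplicative.ofAdd 0)).comp
      ((continuous_ofAdd.tendsto (0 : (AddMonoidHom.mulLeft ((p : ℤ_[p]) ^ m)).range)).comp hgk')
    simp only [Function.comp_def, ofAdd_nsmul, map_pow, ofAdd_zero, map_one] at h1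
    exact h1
  have hukL : Filter.Tendsto (fun k : ℕ => ((u : L)) ^ p ^ k) atTop (𝓝 1) := by
    have := (Units.continuous_val.tendsto (1 : Lˣ)).comp huk
    simpa [Function.comp_def] using this
  -- step 2 : ‖u‖ = 1
  have hunorm : ‖(u : L)‖ = 1 := by
    apply aux_real_eq_one (p := p) (norm_pos_iff.mpr u.ne_zero)
    have := hukL.norm
    simpa [norm_pow] using this
  -- step 3 : ‖u - 1‖ < 1
  have hu1 : ‖(u : L) - 1‖ < 1 := by
    have hev : ∀ᶠ k in atTop, ‖((u : L)) ^ p ^ k - 1‖ < 1 := by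
      have := Metric.tendsto_nhds.mp hukL 1 one_pos
      filter_upwards [this] with k hk
      rwa [dist_eq_norm] at hk
    obtain ⟨k, hk⟩ := hev.exists
    exact aux_backward hL' (le_of_eq hunorm) hk
  -- step 4 : take v with v ^ p ^ m = u
  obtain ⟨v, hv⟩ := IsAlgClosed.exists_pow_nat_eq ((u : L)) (pow_pos hppos m)
  have hvnorm : ‖v‖ = 1 := by
    have hpow : ‖v‖ ^ p ^ m = 1 := by rw [← norm_pow, hv, hunorm]
    have hvpos : 0 < ‖v‖ := by
      rcases (norm_nonneg v).lt_or_eq with h | h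
      · exact h
      · exfalso
        rw [← h, zero_pow (pow_pos hppos m).ne'] at hpow
        exact zero_ne_one hpow
    rcases lt_trichotomy ‖v‖ 1 with h | h | h
    · exact absurd hpow (by
        have := pow_lt_one₀ hvpos.le h (pow_pos hppos m).ne'
        exact this.ne)
    · exact h
    · exact absurd hpow (by
        have := one_lt_pow₀ h (pow_pos hppos m).ne'
        exact this.ne')
  have hv1 : ‖v - 1‖ < 1 := by
    apply aux_backward hL' (le_of_eq hvnorm) (n := m)
    rw [hv]; exact hu1
  -- step 5 : build ψ
  have hFnorm : ∀ x : ℤ_[p], ‖padPow v x‖ = 1 := padPow_norm hL' hv1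
  have hFne : ∀ x : ℤ_[p], padPow v x ≠ 0 := fun x => by
    intro h
    have := hFnorm x
    rw [h, norm_zero] at this
    exact zero_ne_one this
  have hinv : ∀ t : ℤ_[p], (padPow v t)⁻¹ = padPow v (-t) := by
    intro t
    apply inv_eq_of_mul_eq_one_right
    rw [← padPow_add hL' hv1, add_neg_cancel]
    simpa using padPow_natCast hL' hv1 0
  refine ⟨{ toFun := fun x => Units.mk0 (padPow v x.toAdd) (hFne _)
            map_one' := ?_
            map_mul' := ?_ }, ?_, ?_⟩
  · apply Units.ext
    have h0 : padPow v ((0 : ℕ) : ℤ_[p]) = v ^ 0 := padPow_natCast hL' hv1 0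
    simpa using h0
  · intro x y
    apply Units.ext
    simpa using padPow_add hL' hv1 x.toAdd y.toAdd
  · -- continuity
    apply Units.continuous_iff.mpr
    refine ⟨(padPow_continuous hL' hv1).comp continuous_toAdd, ?_⟩
    have he : (fun x : Multiplicative ℤ_[p] =>
        ((((Units.mk0 (padPow v x.toAdd) (hFne _)) : Lˣ)⁻¹ : Lˣ) : L))
        = fun x : Multiplicative ℤ_[p] => padPow v (-x.toAdd) := by
      funext x
      rw [Units.val_inv_eq_inv_val, Units.val_mk0, hinv]
    simp only [MonoidHom.coe_mk, OneHom.coe_mk]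
    rw [he]
    exact (padPow_continuous hL' hv1).comp (continuous_neg.comp continuous_toAdd)
  · -- extension property
    intro x
    obtain ⟨z, hz⟩ := x.2
    have hzval : (p : ℤ_[p]) ^ m * z = (x : ℤ_[p]) := hz
    -- two continuous functions agreeing on ℕ
    have key : (fun z : ℤ_[p] => padPow v ((p : ℤ_[p]) ^ m * z))
        = fun z : ℤ_[p] => ((φ (Multiplicative.ofAdd
            (⟨(p : ℤ_[p]) ^ m * z, ⟨z, rfl⟩⟩ :
              (AddMonoidHom.mulLeft ((p : ℤ_[p]) ^ m)).range))) : L) := by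
      apply PadicInt.denseRange_natCast.equalizer
      · exact (padPow_continuous hL' hv1).comp (continuous_const.mul continuous_id)
      · refine Units.continuous_val.comp (hφ.comp (continuous_ofAdd.comp ?_))
        exact Continuous.subtype_mk (continuous_const.mul continuous_id) _
      · funext n
        have hl : padPow v ((p : ℤ_[p]) ^ m * (n : ℤ_[p])) = v ^ (p ^ m * n) := by
          have hc : ((p : ℤ_[p]) ^ m * (n : ℤ_[p])) = (((p ^ m * n : ℕ) : ℤ_[p])) := by
            push_cast; ring
          rw [hc]
          exact padPow_natCast hL' hv1 _
        have hxn : (⟨(p : ℤ_[p]) ^ m * (n : ℤ_[p]), ⟨(n : ℤ_[p]), rfl⟩⟩ :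
            (AddMonoidHom.mulLeft ((p : ℤ_[p]) ^ m)).range) = n • base := by
          apply Subtype.ext
          push_cast [base]
          rw [nsmul_eq_mul]
          ring
        simp only [Function.comp_def, hl, hxn, ofAdd_nsmul, map_pow]
        rw [pow_mul, hv]
        simp
        rfl
    have hkz := congrFun key z
    apply Units.ext
    simp only [MonoidHom.coe_mk, OneHom.coe_mk, Units.val_mk0]
    rw [show ((Multiplicative.ofAdd ((x : ℤ_[p]))).toAdd) = (p : ℤ_[p]) ^ m * z by
      simp [hzval]]
    rw [hkz]
    congr 2
    apply Subtype.ext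
    exact hzval

end final
end

section
/- Let N = N_tor ⊕ (⊕_{i=1}^d ℤ_p) be a topological abelian group, where N_tor is finite, and let N' = {0} ⊕ (⊕_{i=1}^d p^{m_i} ℤ_p) with integers m_i ≥ 0 be an open subgroup. Then every continuous character N' → \bar{ℚ}_p^× extends to a continuous character N → \bar{ℚ}_p^×. -/
open Filter Finset

section Ultra

set_option linter.unusedSectionVars false

variable {p : ℕ} [hp : Fact p.Prime] {L : Type} [NormedField L] [IsUltrametricDist L]

/-- Binomial decomposition of `c^p - 1`. -/
lemma binom_decomp (c : L) :
    c ^ p - 1 = (c - 1) ^ p + ∑ i ∈ Finset.range (p - 1), (c - 1) ^ (i + 1) * (p.choose (i + 1) : L) := by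
  have hp1 : p - 1 + 1 = p := Nat.succ_pred_eq_of_pos hp.out.pos
  have hbin := add_pow (c - 1) 1 p
  simp only [one_pow, mul_one, sub_add_cancel] at hbin
  rw [hbin, ← hp1, Finset.sum_range_succ, Finset.sum_range_succ']
  simp only [hp1, Nat.choose_self, Nat.cast_one, pow_zero, Nat.choose_zero_right, mul_one, one_mul]
  ring

lemma norm_choose_le {k : ℕ} (hk0 : k ≠ 0) (hkp : k < p) :
    ‖(p.choose k : L)‖ ≤ ‖(p : L)‖ := by
  obtain ⟨t, ht⟩ := hp.out.dvd_choose_self hk0 hkp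
  rw [ht]
  push_cast
  rw [norm_mul]
  calc ‖(p:L)‖ * ‖(t:L)‖ ≤ ‖(p:L)‖ * 1 := by
        gcongr; exact IsUltrametricDist.norm_natCast_le_one L t
    _ = ‖(p:L)‖ := mul_one _

/-- norm of `c^m - 1` is at most norm of `c - 1` for `‖c‖ ≤ 1`. -/
lemma norm_pow_sub_one_le {c : L} (hc : ‖c‖ ≤ 1) (m : ℕ) : ‖c ^ m - 1‖ ≤ ‖c - 1‖ := by
  rw [← geom_sum_mul, norm_mul]
  calc ‖∑ i ∈ Finset.range m, c ^ i‖ * ‖c - 1‖ ≤ 1 * ‖c - 1‖ := by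
        gcongr
        exact IsUltrametricDist.norm_sum_le_of_forall_le_of_nonneg zero_le_one
          (fun i _ => by simpa using pow_le_one₀ (norm_nonneg c) hc)
    _ = ‖c - 1‖ := one_mul _

/-- Step contraction lemma. -/
lemma step_contraction {c : L} (hc : ‖c - 1‖ ≤ 1) :
    ‖c ^ p - 1‖ ≤ max ‖(p : L)‖ ‖c - 1‖ * ‖c - 1‖ := by
  rw [binom_decomp c]
  have h2 : 2 ≤ p := hp.out.two_le
  refine (IsUltrametricDist.norm_add_le_max _ _).trans (max_le ?_ ?_)
  · rw [norm_pow]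
    calc ‖c - 1‖ ^ p ≤ ‖c - 1‖ ^ 2 :=
        pow_le_pow_of_le_one (norm_nonneg _) hc h2
      _ = ‖c - 1‖ * ‖c - 1‖ := by ring
      _ ≤ max ‖(p : L)‖ ‖c - 1‖ * ‖c - 1‖ := by gcongr; exact le_max_right _ _
  · refine IsUltrametricDist.norm_sum_le_of_forall_le_of_nonneg
      (by positivity) (fun i hi => ?_)
    rw [norm_mul, norm_pow]
    have hchoose : ‖(p.choose (i + 1) : L)‖ ≤ ‖(p : L)‖ :=
      norm_choose_le (Nat.succ_ne_zero i) (by have := Finset.mem_range.mp hi; omega)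
    have hpow : ‖c - 1‖ ^ (i + 1) ≤ ‖c - 1‖ :=
      pow_le_of_le_one (norm_nonneg _) hc (Nat.succ_ne_zero i)
    calc ‖c - 1‖ ^ (i + 1) * ‖(p.choose (i + 1) : L)‖
        ≤ ‖c - 1‖ * ‖(p : L)‖ :=
          mul_le_mul hpow hchoose (norm_nonneg _) (norm_nonneg _)
      _ = ‖(p : L)‖ * ‖c - 1‖ := by ring
      _ ≤ max ‖(p : L)‖ ‖c - 1‖ * ‖c - 1‖ := by gcongr; exact le_max_left _ _

/-- If `‖c‖ ≤ 1` and `‖c - 1‖ = 1` then `‖c^p - 1‖ = 1`. -/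
lemma no_descent (hpL : ‖(p : L)‖ < 1) {c : L} (hc : ‖c‖ ≤ 1) (h1 : ‖c - 1‖ = 1) :
    ‖c ^ p - 1‖ = 1 := by
  have hS : ‖∑ i ∈ Finset.range (p - 1), (c - 1) ^ (i + 1) * (p.choose (i + 1) : L)‖ ≤ ‖(p:L)‖ := by
    refine IsUltrametricDist.norm_sum_le_of_forall_le_of_nonneg (norm_nonneg _) (fun i hi => ?_)
    rw [norm_mul, norm_pow, h1, one_pow, one_mul]
    exact norm_choose_le (Nat.succ_ne_zero i) (by have := Finset.mem_range.mp hi; omega)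
  have hmain : ‖(c - 1) ^ p‖ = 1 := by rw [norm_pow, h1, one_pow]
  have hne : ‖∑ i ∈ Finset.range (p - 1), (c - 1) ^ (i + 1) * (p.choose (i + 1) : L)‖ ≠ ‖(c - 1) ^ p‖ := by
    rw [hmain]; exact ne_of_lt (hS.trans_lt hpL)
  rw [binom_decomp c, add_comm, IsUltrametricDist.norm_add_eq_max_of_norm_ne_norm hne, hmain]
  exact max_eq_right (hS.trans hpL.le)

/-- norm one criterion from `‖c-1‖ < 1`. -/
lemma norm_eq_one_of_norm_sub_one_lt {c : L} (h : ‖c - 1‖ < 1) : ‖c‖ = 1 := by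
  have : c = (c - 1) + 1 := by ring
  rw [this, IsUltrametricDist.norm_add_eq_max_of_norm_ne_norm (by rw [norm_one]; exact h.ne)]
  simpa using h.le

/-- If `‖c‖ ≤ 1` and some `p^n`-power of `c` is a 1-unit then so is `c`. -/
lemma one_unit_of_pow (hpL : ‖(p : L)‖ < 1) {c : L} (hc : ‖c‖ ≤ 1) {n : ℕ}
    (h : ‖c ^ p ^ n - 1‖ < 1) : ‖c - 1‖ < 1 := by
  by_contra hge
  have h1 : ‖c - 1‖ = 1 := le_antisymm
    (by
      have := IsUltrametricDist.norm_add_le_max c (-1)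
      simp only [norm_neg, norm_one] at this
      calc ‖c - 1‖ = ‖c + (-1)‖ := by ring_nf
        _ ≤ max ‖c‖ 1 := by simpa using this
        _ ≤ 1 := max_le hc le_rfl) (not_lt.mp hge)
  have key : ∀ k : ℕ, ‖c ^ p ^ k - 1‖ = 1 := by
    intro k
    induction k with
    | zero => simpa using h1
    | succ k ih =>
      have hck : ‖c ^ p ^ k‖ ≤ 1 := by
        rw [norm_pow]; exact pow_le_one₀ (norm_nonneg _) hc
      have := no_descent hpL hck ih
      rwa [← pow_mul, ← pow_succ] at this
  exact absurd (key n ▸ h) (lt_irrefl _)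

end Ultra

section Construct

set_option linter.unusedSectionVars false

variable {p : ℕ} [hp : Fact p.Prime] {L : Type} [NormedField L] [IsUltrametricDist L]
  [CompleteSpace L]

lemma norm_appr_sub (x : ℤ_[p]) (n : ℕ) : ‖x - (x.appr n : ℤ_[p])‖ ≤ (p : ℝ) ^ (-(n:ℤ)) :=
  (PadicInt.norm_le_pow_iff_mem_span_pow _ n).mpr (PadicInt.appr_spec n x)

lemma tendsto_appr (x : ℤ_[p]) :
    Tendsto (fun n => ((x.appr n : ℤ_[p]))) atTop (nhds x) := by
  rw [tendsto_iff_norm_sub_tendsto_zero]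
  have h1 : (1:ℝ) < (p:ℝ) := by exact_mod_cast hp.out.one_lt
  have hlim : Tendsto (fun n : ℕ => (p:ℝ) ^ (-(n:ℤ))) atTop (nhds 0) := by
    have := tendsto_pow_atTop_nhds_zero_of_lt_one (by positivity : (0:ℝ) ≤ (p:ℝ)⁻¹)
      (inv_lt_one_of_one_lt₀ h1)
    refine this.congr (fun n => ?_)
    rw [zpow_neg, zpow_natCast, inv_pow]
  refine squeeze_zero (g := fun n : ℕ => (p:ℝ) ^ (-(n:ℤ))) (fun n => norm_nonneg _)
    (fun n => ?_) hlim
  rw [norm_sub_rev]; exact norm_appr_sub x n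

/-- Main construction: continuous character of `ℤ_[p]` with value `b` at `1`. -/
lemma exists_char (hpL : ‖(p : L)‖ < 1) {b : L} (hb : ‖b - 1‖ < 1) :
    ∃ g : ℤ_[p] → L, Continuous g ∧ (∀ x y, g (x + y) = g x * g y) ∧
      (∀ k : ℕ, g (k : ℤ_[p]) = b ^ k) ∧ (∀ x, ‖g x - 1‖ ≤ ‖b - 1‖) := by
  have hb1 : ‖b‖ = 1 := norm_eq_one_of_norm_sub_one_lt hb
  have hb1' : ‖b‖ ≤ 1 := hb1.le
  set r : ℝ := max ‖(p : L)‖ ‖b - 1‖ with hr_def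
  have hr0 : 0 ≤ r := le_max_of_le_left (norm_nonneg _)
  have hr1 : r < 1 := max_lt hpL hb
  -- contraction on p-power exponents
  have contr : ∀ n : ℕ, ‖b ^ p ^ n - 1‖ ≤ r ^ n := by
    intro n
    induction n with
    | zero => simpa using hb.le
    | succ n ih =>
      have hbn : ‖b ^ p ^ n‖ ≤ 1 := by rw [norm_pow]; exact pow_le_one₀ (norm_nonneg _) hb1'
      have h1 : ‖b ^ p ^ n - 1‖ ≤ 1 := ih.trans (pow_le_one₀ hr0 hr1.le)
      have := step_contraction (p := p) h1
      rw [← pow_mul, ← pow_succ] at this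
      refine this.trans ?_
      have hmax : max ‖(p : L)‖ ‖b ^ p ^ n - 1‖ ≤ r := by
        refine max_le (le_max_left _ _) ?_
        exact ((norm_pow_sub_one_le hb1' _).trans (le_max_right _ _))
      calc max ‖(p : L)‖ ‖b ^ p ^ n - 1‖ * ‖b ^ p ^ n - 1‖ ≤ r * r ^ n :=
          mul_le_mul hmax ih (norm_nonneg _) hr0
        _ = r ^ (n + 1) := by ring
  -- key estimate on exponents congruent mod p^n
  have E : ∀ (n j k : ℕ), ‖((j : ℤ_[p]) - (k : ℤ_[p]))‖ ≤ (p:ℝ) ^ (-(n:ℤ)) →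
      ‖b ^ j - b ^ k‖ ≤ r ^ n := by
    have main : ∀ (n j k : ℕ), k ≤ j → ‖((j : ℤ_[p]) - (k : ℤ_[p]))‖ ≤ (p:ℝ) ^ (-(n:ℤ)) →
        ‖b ^ j - b ^ k‖ ≤ r ^ n := by
      intro n j k hkj h
      have hdvd : ((p:ℤ) ^ n) ∣ ((j : ℤ) - (k : ℤ)) := by
        rw [← PadicInt.norm_int_le_pow_iff_dvd]
        push_cast
        exact_mod_cast h
      obtain ⟨t, ht⟩ := hdvd
      have hp0 : (0:ℤ) < (p:ℤ) := by exact_mod_cast hp.out.pos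
      have hpn : (0:ℤ) < (p:ℤ) ^ n := pow_pos hp0 n
      have hjk : ((k:ℤ)) ≤ (j:ℤ) := by exact_mod_cast hkj
      have h0 : 0 ≤ t := by nlinarith [ht, hpn]
      have hj : j = k + p ^ n * t.toNat := by
        zify
        rw [Int.toNat_of_nonneg h0]
        push_cast
        linarith [ht]
      have : b ^ j - b ^ k = b ^ k * ((b ^ p ^ n) ^ t.toNat - 1) := by
        rw [hj, pow_add, ← pow_mul]; ring
      rw [this, norm_mul]
      have h1 : ‖b ^ k‖ ≤ 1 := by rw [norm_pow]; exact pow_le_one₀ (norm_nonneg _) hb1'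
      have h2 : ‖(b ^ p ^ n) ^ t.toNat - 1‖ ≤ ‖b ^ p ^ n - 1‖ :=
        norm_pow_sub_one_le (by rw [norm_pow]; exact pow_le_one₀ (norm_nonneg _) hb1') _
      calc ‖b ^ k‖ * ‖(b ^ p ^ n) ^ t.toNat - 1‖ ≤ 1 * (r ^ n) :=
          mul_le_mul h1 (h2.trans (contr n)) (norm_nonneg _) zero_le_one
        _ = r ^ n := one_mul _
    intro n j k h
    rcases le_total k j with hkj | hjk
    · exact main n j k hkj h
    · rw [norm_sub_rev]
      exact main n k j hjk (by rwa [norm_sub_rev] at h)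
  -- the approximating sequence
  set seq : ℤ_[p] → ℕ → L := fun x n => b ^ x.appr n with hseq
  have tri : ∀ (x : ℤ_[p]) (j k : ℕ) (n : ℕ), ‖x - (j:ℤ_[p])‖ ≤ (p:ℝ)^(-(n:ℤ)) →
      ‖x - (k:ℤ_[p])‖ ≤ (p:ℝ)^(-(n:ℤ)) → ‖b ^ j - b ^ k‖ ≤ r ^ n := by
    intro x j k n h1 h2
    refine E n j k ?_
    have heq : ((j:ℤ_[p])) - k = (x - (k:ℤ_[p])) + (-(x - (j:ℤ_[p]))) := by ring
    rw [heq]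
    refine (PadicInt.nonarchimedean _ _).trans (max_le h2 ?_)
    rwa [norm_neg]
  have cauchy : ∀ x : ℤ_[p], CauchySeq (seq x) := by
    intro x
    refine SeminormedAddCommGroup.cauchySeq_of_le_geometric (C := 1) hr1 (fun n => ?_)
    rw [one_mul]
    refine tri x (x.appr n) (x.appr (n+1)) n (norm_appr_sub x n) ?_
    refine (norm_appr_sub x (n+1)).trans (zpow_le_zpow_right₀ ?_ (by omega))
    exact_mod_cast hp.out.one_lt.le
  have hex : ∀ x : ℤ_[p], ∃ l : L, Tendsto (seq x) atTop (nhds l) :=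
    fun x => cauchySeq_tendsto_of_complete (cauchy x)
  choose g hg using hex
  have hrpow : Tendsto (fun n : ℕ => r ^ n) atTop (nhds 0) :=
    tendsto_pow_atTop_nhds_zero_of_lt_one hr0 hr1
  -- master convergence lemma
  have gE : ∀ (x : ℤ_[p]) (k : ℕ → ℕ), (∀ n, ‖x - (k n : ℤ_[p])‖ ≤ (p:ℝ)^(-(n:ℤ))) →
      Tendsto (fun n => b ^ k n) atTop (nhds (g x)) := by
    intro x k hk
    have hzero : Tendsto (fun n => b ^ k n - seq x n) atTop (nhds 0) :=
      squeeze_zero_norm (fun n => tri x (k n) (x.appr n) n (hk n) (norm_appr_sub x n)) hrpow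
    have := hzero.add (hg x)
    simpa using this
  have g_nat : ∀ k : ℕ, g (k : ℤ_[p]) = b ^ k := by
    intro k
    refine tendsto_nhds_unique (gE (k : ℤ_[p]) (fun _ => k) (fun n => ?_)) tendsto_const_nhds
    simp only [sub_self, norm_zero]
    positivity
  have g_add : ∀ x y, g (x + y) = g x * g y := by
    intro x y
    have h1 : Tendsto (fun n => b ^ (x.appr n + y.appr n)) atTop (nhds (g x * g y)) := by
      refine ((hg x).mul (hg y)).congr (fun n => ?_)
      rw [pow_add]
    have h2 : Tendsto (fun n => b ^ (x.appr n + y.appr n)) atTop (nhds (g (x+y))) := by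
      refine gE (x+y) _ (fun n => ?_)
      have heq : (x + y) - ((x.appr n + y.appr n : ℕ) : ℤ_[p])
          = (x - (x.appr n : ℤ_[p])) + (y - (y.appr n : ℤ_[p])) := by push_cast; ring
      rw [heq]
      exact (PadicInt.nonarchimedean _ _).trans (max_le (norm_appr_sub x n) (norm_appr_sub y n))
    exact tendsto_nhds_unique h2 h1
  have g_norm : ∀ z : ℤ_[p], ‖g z - 1‖ ≤ ‖b - 1‖ := by
    intro x
    have h1 : Tendsto (fun n => ‖seq x n - 1‖) atTop (nhds ‖g x - 1‖) :=
      ((hg x).sub tendsto_const_nhds).norm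
    exact le_of_tendsto h1 (Eventually.of_forall (fun n => norm_pow_sub_one_le hb1' _))
  have g_small : ∀ (x : ℤ_[p]) (n : ℕ), ‖x‖ ≤ (p:ℝ)^(-(n:ℤ)) → ‖g x - 1‖ ≤ r ^ n := by
    intro x n hx
    have h1 : Tendsto (fun m => ‖seq x m - 1‖) atTop (nhds ‖g x - 1‖) :=
      ((hg x).sub tendsto_const_nhds).norm
    refine le_of_tendsto h1 ?_
    filter_upwards [eventually_ge_atTop n] with mm hm
    have h0 : ‖x - ((0:ℕ):ℤ_[p])‖ ≤ (p:ℝ)^(-(n:ℤ)) := by simpa using hx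
    have h2 : ‖x - ((x.appr mm : ℕ):ℤ_[p])‖ ≤ (p:ℝ)^(-(n:ℤ)) := by
      refine (norm_appr_sub x mm).trans (zpow_le_zpow_right₀ ?_ (by omega))
      exact_mod_cast hp.out.one_lt.le
    have := tri x (x.appr mm) 0 n h2 h0
    simpa using this
  have g_cont : Continuous g := by
    rw [Metric.continuous_iff]
    intro x ε hε
    obtain ⟨n, hn⟩ := exists_pow_lt_of_lt_one hε hr1
    have hppos : (0:ℝ) < (p:ℝ)^(-(n:ℤ)) := by
      have : (0:ℝ) < (p:ℝ) := by exact_mod_cast hp.out.pos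
      positivity
    refine ⟨(p:ℝ)^(-(n:ℤ)), hppos, fun y hy => ?_⟩
    have h1 : ‖y - x‖ ≤ (p:ℝ)^(-(n:ℤ)) := by
      rw [dist_eq_norm] at hy; exact hy.le
    have h2 : ‖g (y - x) - 1‖ ≤ r ^ n := g_small _ n h1
    have hgx_norm : ‖g x‖ ≤ 1 := by
      calc ‖g x‖ = ‖(g x - 1) + 1‖ := by ring_nf
        _ ≤ max ‖g x - 1‖ ‖(1:L)‖ := IsUltrametricDist.norm_add_le_max _ _
        _ ≤ 1 := max_le ((g_norm x).trans hb.le) (by simp)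
    rw [dist_eq_norm]
    have heq : g y - g x = g x * (g (y - x) - 1) := by
      have h3 := g_add (y - x) x
      rw [sub_add_cancel] at h3
      rw [h3]; ring
    rw [heq, norm_mul]
    calc ‖g x‖ * ‖g (y-x) - 1‖ ≤ 1 * r ^ n :=
        mul_le_mul hgx_norm h2 (norm_nonneg _) zero_le_one
      _ = r ^ n := one_mul _
      _ < ε := hn
  exact ⟨g, g_cont, g_add, g_nat, g_norm⟩

end Construct

set_option maxHeartbeats 1000000 in
/-- Let `N = N_tor ⊕ (⊕_{i=1}^d ℤ_p)` with `N_tor` finite, and let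
`N' = {0} ⊕ (⊕_i p^{m_i} ℤ_p)` (an open subgroup).  Every continuous character
`N' → \bar{ℚ}_p^×` (valued in an algebraically closed complete nonarchimedean field `L`
with `‖p‖ = p⁻¹`) extends to a continuous character of `N`. -/
theorem stmt_4 (p : ℕ) [Fact p.Prime] (d : ℕ)
    (T : Type) [AddCommGroup T] [Finite T] [TopologicalSpace T] [DiscreteTopology T]
    (m : Fin d → ℕ)
    (L : Type) [NormedField L] [IsAlgClosed L] [CompleteSpace L] [IsUltrametricDist L]
    (hL : ‖(p : L)‖ = (p : ℝ)⁻¹)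
    (N' : AddSubgroup (T × (Fin d → ℤ_[p])))
    (hN' : N' = AddSubgroup.prod ⊥ (AddSubgroup.pi Set.univ
      fun i => (AddMonoidHom.mulLeft ((p : ℤ_[p]) ^ (m i))).range))
    (φ : Multiplicative N' →* Lˣ) (hφ : Continuous φ) :
    ∃ ψ : Multiplicative (T × (Fin d → ℤ_[p])) →* Lˣ, Continuous ψ ∧
      ∀ x : N', ψ (Multiplicative.ofAdd (x : T × (Fin d → ℤ_[p]))) =
        φ (Multiplicative.ofAdd x) := by
  have hp := (inferInstance : Fact p.Prime)
  have hp1 : (1:ℝ) < (p:ℝ) := by exact_mod_cast hp.out.one_lt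
  have hpL : ‖(p:L)‖ < 1 := by rw [hL]; exact inv_lt_one_of_one_lt₀ hp1
  -- membership of the "diagonal" elements
  have memk : ∀ k : Fin d → ℕ,
      (((0:T), fun j => (p:ℤ_[p])^(m j) * (k j : ℤ_[p])) : T × (Fin d → ℤ_[p])) ∈ N' := by
    intro k
    rw [hN']
    refine AddSubgroup.mem_prod.mpr ⟨AddSubgroup.mem_bot.mpr rfl, ?_⟩
    refine (AddSubgroup.mem_pi _).mpr (fun j _ => ?_)
    exact ⟨(k j : ℤ_[p]), rfl⟩
  set w : (Fin d → ℕ) → N' :=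
    fun k => ⟨((0:T), fun j => (p:ℤ_[p])^(m j) * (k j : ℤ_[p])), memk k⟩ with hw
  -- basis elements
  set e : Fin d → N' := fun i => w (fun j => if j = i then 1 else 0) with he
  set c : Fin d → Lˣ := fun i => φ (Multiplicative.ofAdd (e i)) with hc
  -- w is a sum of the basis elements
  have hw_sum : ∀ k : Fin d → ℕ, w k = ∑ j, k j • e j := by
    intro k
    apply Subtype.ext
    have hcoe : ((∑ j, k j • e j : N') : T × (Fin d → ℤ_[p]))
        = ∑ j, k j • ((e j : T × (Fin d → ℤ_[p]))) := by
      have h1 := map_sum N'.subtype (fun j => k j • e j) Finset.univ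
      have h2 : ∀ j : Fin d, N'.subtype (k j • e j) = k j • ((e j : T × (Fin d → ℤ_[p]))) :=
        fun j => map_nsmul N'.subtype _ _
      simp only [h2] at h1; exact h1
    rw [hcoe]
    refine Prod.ext ?_ ?_
    · simp [Prod.fst_sum, hw, he]
    · rw [Prod.snd_sum]
      funext jj
      rw [Finset.sum_apply]
      rw [Finset.sum_eq_single jj]
      · simp [hw, he, mul_comm]
      · intro j _ hj
        simp [hw, he, (Ne.symm hj : ¬ (jj = j))]
      · simp
  -- φ on w k
  have hφw : ∀ k : Fin d → ℕ, φ (Multiplicative.ofAdd (w k)) = ∏ j, (c j) ^ (k j) := by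
    intro k
    rw [hw_sum, ofAdd_sum, map_prod]
    exact Finset.prod_congr rfl (fun j _ => by rw [ofAdd_nsmul, map_pow])
  -- the values c i satisfy (c i)^(p^n) → 1
  have hcpow : ∀ i, Filter.Tendsto (fun n : ℕ => ((c i : L)) ^ (p ^ n))
      Filter.atTop (nhds 1) := by
    intro i
    have hwk : ∀ n : ℕ, w (fun j => if j = i then p ^ n else 0) = (p ^ n) • e i := by
      intro n
      rw [hw_sum]
      rw [Finset.sum_eq_single i]
      · rw [if_pos rfl]
      · intro j _ hj; rw [if_neg hj, zero_smul]
      · exact fun h => absurd (Finset.mem_univ i) h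
    have htend : Filter.Tendsto (fun n : ℕ => w (fun j => if j = i then p ^ n else 0))
        Filter.atTop (nhds 0) := by
      rw [tendsto_subtype_rng]
      have h0 : ((0 : N') : T × (Fin d → ℤ_[p])) = ((0:T), (0 : Fin d → ℤ_[p])) := rfl
      have hvw : ∀ k : Fin d → ℕ, ((w k : T × (Fin d → ℤ_[p])))
          = ((0:T), fun j => (p:ℤ_[p])^(m j) * (k j : ℤ_[p])) := fun k => rfl
      simp only [h0, hvw]
      refine Filter.Tendsto.prodMk_nhds tendsto_const_nhds ?_
      rw [tendsto_pi_nhds]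
      intro j
      rcases eq_or_ne j i with rfl | hji
      · have hpinv1 : (p:ℝ)⁻¹ ≤ 1 := inv_le_one_of_one_le₀ hp1.le
        have hpinv0 : (0:ℝ) ≤ (p:ℝ)⁻¹ := by positivity
        simp only [Pi.zero_apply]
        refine squeeze_zero_norm (a := fun n : ℕ => ((p:ℝ)⁻¹) ^ n) (fun n => ?_) ?_
        · have hkey : ‖(p:ℤ_[p]) ^ m j * (p:ℤ_[p]) ^ n‖ ≤ ((p:ℝ)⁻¹) ^ n := by
            rw [norm_mul, norm_pow, norm_pow, PadicInt.norm_p]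
            exact mul_le_of_le_one_left (by positivity) (pow_le_one₀ hpinv0 hpinv1)
          simpa using hkey
        · exact tendsto_pow_atTop_nhds_zero_of_lt_one hpinv0 (inv_lt_one_of_one_lt₀ hp1)
      · simp only [Pi.zero_apply, if_neg hji, Nat.cast_zero, mul_zero]
        exact tendsto_const_nhds
    have hφt : Filter.Tendsto (fun n : ℕ => φ (Multiplicative.ofAdd
        (w (fun j => if j = i then p ^ n else 0)))) Filter.atTop (nhds 1) := by
      have h1 : Filter.Tendsto (fun n : ℕ => Multiplicative.ofAdd
          (w (fun j => if j = i then p ^ n else 0))) Filter.atTop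
          (nhds (Multiplicative.ofAdd (0 : N'))) := htend
      have := (hφ.tendsto _).comp h1
      simpa [Function.comp_def] using this
    have hφval : ∀ n : ℕ, ((φ (Multiplicative.ofAdd
        (w (fun j => if j = i then p ^ n else 0)))) : L) = ((c i : L)) ^ (p ^ n) := by
      intro n
      rw [hwk n]
      have : φ (Multiplicative.ofAdd ((p ^ n) • e i)) = (c i) ^ (p ^ n) := by
        rw [ofAdd_nsmul, map_pow]
      rw [this]
      simp
    have := (Units.continuous_val.tendsto 1).comp hφt
    refine this.congr (fun n => hφval n)
  -- construct roots b i with good properties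
  have hex : ∀ i, ∃ b : L, b ^ (p ^ (m i)) = (c i : L) ∧ ‖b - 1‖ < 1 := by
    intro i
    obtain ⟨n₀, hn₀⟩ : ∃ n : ℕ, ‖((c i : L)) ^ (p ^ n) - 1‖ < 1 := by
      have := (Metric.tendsto_atTop.mp (hcpow i) 1 one_pos)
      obtain ⟨n₀, hn₀⟩ := this
      exact ⟨n₀, by rw [← dist_eq_norm]; exact hn₀ n₀ le_rfl⟩
    have hnorm1 : ‖(c i : L)‖ = 1 := by
      have h1 : ‖((c i : L)) ^ (p ^ n₀)‖ = 1 := norm_eq_one_of_norm_sub_one_lt hn₀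
      rw [norm_pow] at h1
      rcases lt_trichotomy ‖(c i : L)‖ 1 with h | h | h
      · exact absurd h1 (by
          have := pow_lt_one₀ (norm_nonneg _) h (pow_pos hp.out.pos n₀).ne'
          exact this.ne)
      · exact h
      · exact absurd h1 (by
          have := one_lt_pow₀ h (pow_pos hp.out.pos n₀).ne'
          exact this.ne')
    have hcu : ‖(c i : L) - 1‖ < 1 := one_unit_of_pow hpL hnorm1.le hn₀
    obtain ⟨b, hbc⟩ := IsAlgClosed.exists_pow_nat_eq (c i : L) (pow_pos hp.out.pos (m i))
    have hbnorm : ‖b‖ = 1 := by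
      have h1 : ‖b‖ ^ (p ^ (m i)) = 1 := by rw [← norm_pow, hbc, hnorm1]
      rcases lt_trichotomy ‖b‖ 1 with h | h | h
      · exact absurd h1 (by
          have := pow_lt_one₀ (norm_nonneg _) h (pow_pos hp.out.pos (m i)).ne'
          exact this.ne)
      · exact h
      · exact absurd h1 (by
          have := one_lt_pow₀ h (pow_pos hp.out.pos (m i)).ne'
          exact this.ne')
    have hb1 : ‖b - 1‖ < 1 := one_unit_of_pow hpL hbnorm.le (by rw [hbc]; exact hcu)
    exact ⟨b, hbc, hb1⟩
  choose b hbc hb1 using hex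
  -- construct the characters g i
  have hgex := fun i => exists_char (p := p) hpL (hb1 i)
  choose g hgcont hgadd hgnat hgnorm using hgex
  have g0 : ∀ i, g i 0 = 1 := fun i => by simpa using hgnat i 0
  have ginv : ∀ i (z : ℤ_[p]), g i z * g i (-z) = 1 := by
    intro i z
    rw [← hgadd]
    simp [g0]
  -- the extension as a function to units
  have hFval : ∀ x : T × (Fin d → ℤ_[p]),
      (∏ i, g i (x.2 i)) * (∏ i, g i (-(x.2 i))) = 1 := by
    intro x
    rw [← Finset.prod_mul_distrib]
    simp [ginv]
  have hFval' : ∀ x : T × (Fin d → ℤ_[p]),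
      (∏ i, g i (-(x.2 i))) * (∏ i, g i (x.2 i)) = 1 := by
    intro x
    rw [mul_comm]; exact hFval x
  set F : T × (Fin d → ℤ_[p]) → Lˣ := fun x =>
    Units.mk (∏ i, g i (x.2 i)) (∏ i, g i (-(x.2 i))) (hFval x) (hFval' x) with hF
  have hFmul : ∀ a b' : Multiplicative (T × (Fin d → ℤ_[p])),
      F (a * b').toAdd = F a.toAdd * F b'.toAdd := by
    intro a b'
    apply Units.ext
    show (∏ i, g i (((a.toAdd + b'.toAdd)).2 i)) = (∏ i, g i (a.toAdd.2 i)) * ∏ i, g i (b'.toAdd.2 i)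
    rw [← Finset.prod_mul_distrib]
    exact Finset.prod_congr rfl (fun i _ => hgadd i _ _)
  set ψ : Multiplicative (T × (Fin d → ℤ_[p])) →* Lˣ :=
    MonoidHom.mk' (fun x => F x.toAdd) hFmul with hψ
  have hψcont : Continuous ψ := by
    rw [Units.continuous_iff]
    constructor
    · show Continuous fun x : Multiplicative (T × (Fin d → ℤ_[p])) => ∏ i, g i (x.toAdd.2 i)
      refine continuous_finset_prod _ (fun i _ => ?_)
      exact (hgcont i).comp ((continuous_apply i).comp (continuous_snd.comp continuous_toAdd))
    · show Continuous fun x : Multiplicative (T × (Fin d → ℤ_[p])) => ∏ i, g i (-(x.toAdd.2 i))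
      refine continuous_finset_prod _ (fun i _ => ?_)
      exact (hgcont i).comp (((continuous_apply i).comp (continuous_snd.comp continuous_toAdd)).neg)
  refine ⟨ψ, hψcont, ?_⟩
  -- the agreement on N'
  intro x
  obtain ⟨hx1, hx2⟩ : (x : T × (Fin d → ℤ_[p])).1 ∈ (⊥ : AddSubgroup T) ∧
      (x : T × (Fin d → ℤ_[p])).2 ∈ AddSubgroup.pi Set.univ
        (fun i => (AddMonoidHom.mulLeft ((p : ℤ_[p]) ^ (m i))).range) := by
    have hx : (x : T × (Fin d → ℤ_[p])) ∈ AddSubgroup.prod ⊥ (AddSubgroup.pi Set.univ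
        fun i => (AddMonoidHom.mulLeft ((p : ℤ_[p]) ^ (m i))).range) := by
      rw [← hN']; exact x.2
    exact AddSubgroup.mem_prod.mp hx
  have hx1' : (x : T × (Fin d → ℤ_[p])).1 = 0 := AddSubgroup.mem_bot.mp hx1
  have hy : ∀ i, ∃ y : ℤ_[p], (p:ℤ_[p])^(m i) * y = (x : T × (Fin d → ℤ_[p])).2 i := by
    intro i
    exact (AddSubgroup.mem_pi _).mp hx2 i (Set.mem_univ i)
  choose y hy using hy
  -- approximating sequence
  have htend : Filter.Tendsto (fun n : ℕ => w (fun i => (y i).appr n)) Filter.atTop (nhds x) := by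
    rw [tendsto_subtype_rng]
    have hxval : (x : T × (Fin d → ℤ_[p])) =
        ((0:T), fun i => (p:ℤ_[p])^(m i) * y i) := by
      refine Prod.ext hx1' ?_
      funext i
      exact (hy i).symm
    rw [hxval]
    refine Filter.Tendsto.prodMk_nhds tendsto_const_nhds ?_
    rw [tendsto_pi_nhds]
    intro i
    exact (tendsto_appr (y i)).const_mul ((p:ℤ_[p])^(m i))
  have h_left : Filter.Tendsto (fun n : ℕ => ((φ (Multiplicative.ofAdd
      (w (fun i => (y i).appr n)))) : L)) Filter.atTop (nhds ((φ (Multiplicative.ofAdd x)) : L)) := by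
    have h1 : Filter.Tendsto (fun n : ℕ => Multiplicative.ofAdd (w (fun i => (y i).appr n)))
        Filter.atTop (nhds (Multiplicative.ofAdd x)) := htend
    exact (Units.continuous_val.tendsto _).comp ((hφ.tendsto _).comp h1)
  have hval : ∀ n : ℕ, ((φ (Multiplicative.ofAdd (w (fun i => (y i).appr n)))) : L)
      = ∏ j, ((c j : L)) ^ ((y j).appr n) := by
    intro n
    rw [hφw]
    rw [← Units.coeHom_apply, map_prod]
    exact Finset.prod_congr rfl (fun j _ => by simp)
  have h_right : Filter.Tendsto (fun n : ℕ => ∏ j, ((c j : L)) ^ ((y j).appr n))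
      Filter.atTop (nhds (∏ j, g j ((x : T × (Fin d → ℤ_[p])).2 j))) := by
    refine tendsto_finset_prod _ (fun j _ => ?_)
    have hterm : ∀ n : ℕ, ((c j : L)) ^ ((y j).appr n)
        = g j (((p ^ (m j) * (y j).appr n : ℕ) : ℤ_[p])) := by
      intro n
      rw [hgnat, ← hbc, ← pow_mul]
    have harg : Filter.Tendsto (fun n : ℕ => ((p ^ (m j) * (y j).appr n : ℕ) : ℤ_[p]))
        Filter.atTop (nhds ((x : T × (Fin d → ℤ_[p])).2 j)) := by
      have : Filter.Tendsto (fun n : ℕ => (p:ℤ_[p])^(m j) * ((y j).appr n : ℤ_[p]))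
          Filter.atTop (nhds ((p:ℤ_[p])^(m j) * y j)) :=
        (tendsto_appr (y j)).const_mul _
      rw [hy j] at this
      refine this.congr (fun n => ?_)
      push_cast
      ring
    have := ((hgcont j).tendsto _).comp harg
    exact this.congr (fun n => (hterm n).symm)
  have key : ((φ (Multiplicative.ofAdd x)) : L) = ∏ j, g j ((x : T × (Fin d → ℤ_[p])).2 j) :=
    tendsto_nhds_unique (h_left.congr (fun n => hval n)) h_right
  apply Units.ext
  exact key.symm
end
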